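/- arXiv:1412.6353 — 6 statements merged into one kernel-verified Lean document; each statement's English description precedes it below -/
import Mathlib

section
/- If a is a right Engel element of a group G (i.e., for every g in G there exists n ≥ 1 with [a, g, g, ..., g] = 1, where g appears n times), then a⁻¹ is a left Engel element of G (i.e., for every g in G there exists m ≥ 1 with [g, a⁻¹, a⁻¹, ..., a⁻¹] = 1, where a⁻¹ appears m times). -/
/-- Iterated Engel commutator: `engel x y n = [x, y, y, ..., y]` (n copies of y),
with the convention `[x, y] = x⁻¹ * y⁻¹ * x * y`. -/
def engel {G : Type*} [Group G] (x y : G) : ℕ → G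
  | 0 => x
  | n + 1 => (engel x y n)⁻¹ * y⁻¹ * engel x y n * y

/-- Conjugation commutes with the Engel commutator. -/
lemma engel_conj {G : Type*} [Group G] (x y t : G) (n : ℕ) :
    engel (t⁻¹ * x * t) (t⁻¹ * y * t) n = t⁻¹ * engel x y n * t := by
  induction n with
  | zero => simp [engel]
  | succ k ih => simp only [engel, ih]; group

/-- Key identity: `[g, a⁻¹, …, a⁻¹]` (n+1 copies) equals `a [aᵍ, a⁻¹, …, a⁻¹] a⁻¹`
(n copies), for `n ≥ 1`. -/
lemma engel_inv_shift {G : Type*} [Group G] (a g : G) (k : ℕ) :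
    engel g a⁻¹ (k + 2) = a * engel (g⁻¹ * a * g) a⁻¹ (k + 1) * a⁻¹ := by
  induction k with
  | zero => simp only [engel]; group
  | succ m ih =>
    show (engel g a⁻¹ (m + 2))⁻¹ * a⁻¹⁻¹ * engel g a⁻¹ (m + 2) * a⁻¹ = _
    rw [ih]
    show _ = a * ((engel (g⁻¹ * a * g) a⁻¹ (m + 1))⁻¹ * a⁻¹⁻¹ *
      engel (g⁻¹ * a * g) a⁻¹ (m + 1) * a⁻¹) * a⁻¹
    group

/-- If `a` is a right Engel element of `G`, then `a⁻¹` is a left Engel element of `G`. -/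
theorem right_engel_inv_left_engel {G : Type*} [Group G] (a : G)
    (h : ∀ g : G, ∃ n ≥ 1, engel a g n = 1) :
    ∀ g : G, ∃ m ≥ 1, engel g a⁻¹ m = 1 := by
  intro g
  obtain ⟨n, hn1, hn⟩ := h (g * a⁻¹ * g⁻¹)
  refine ⟨n + 1, by omega, ?_⟩
  obtain ⟨k, rfl⟩ : ∃ k, n = k + 1 := ⟨n - 1, by omega⟩
  rw [engel_inv_shift]
  have hc : engel (g⁻¹ * a * g) a⁻¹ (k + 1) =
      g⁻¹ * engel a (g * a⁻¹ * g⁻¹) (k + 1) * g := by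
    have := engel_conj a (g * a⁻¹ * g⁻¹) g (k + 1)
    simpa [mul_assoc] using this
  rw [hc, hn]
  group
end

section
/- If G is a group and N is a finite normal subgroup of G of order m such that N is contained in Z_i(G) for some i ≥ 1 (i.e., N lies in the hypercentre), then N ≤ Z_m(G). -/
private lemma stab_aux {G : Type*} [Group G] (N : Subgroup G) (hN : N.Normal) (k : ℕ)
    (h : N ⊓ upperCentralSeries G (k + 1) = N ⊓ upperCentralSeries G k) :
    ∀ l, k ≤ l → N ⊓ upperCentralSeries G l = N ⊓ upperCentralSeries G k := by
  intro l hl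
  induction l with
  | zero =>
    have : k = 0 := Nat.le_zero.mp hl
    subst this; rfl
  | succ n ih =>
    rcases Nat.lt_or_ge k (n + 1) with hk | hk
    · have hkn : k ≤ n := Nat.lt_succ_iff.mp hk
      have ihn := ih hkn
      apply le_antisymm
      · intro x hx
        obtain ⟨hxN, hxZ⟩ := Subgroup.mem_inf.mp hx
        have hx' : x ∈ N ⊓ upperCentralSeries G (k + 1) := by
          refine Subgroup.mem_inf.mpr ⟨hxN, mem_upperCentralSeries_succ_iff.mpr fun y => ?_⟩
          have hcomm : x * y * x⁻¹ * y⁻¹ ∈ N := by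
            have : y * x⁻¹ * y⁻¹ ∈ N := by
              simpa [mul_assoc] using hN.conj_mem x⁻¹ (inv_mem hxN) y
            simpa [mul_assoc] using mul_mem hxN this
          have hz : x * y * x⁻¹ * y⁻¹ ∈ upperCentralSeries G n :=
            (mem_upperCentralSeries_succ_iff).mp hxZ y
          have hmem : x * y * x⁻¹ * y⁻¹ ∈ N ⊓ upperCentralSeries G k :=
            ihn ▸ Subgroup.mem_inf.mpr ⟨hcomm, hz⟩
          exact (Subgroup.mem_inf.mp hmem).2
        rw [h] at hx'
        exact hx'
      · exact inf_le_inf_left N (upperCentralSeries_mono G (Nat.le_succ_of_le hkn))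
    · have : k = n + 1 := le_antisymm hl hk
      rw [this]

/-- A finite normal subgroup of order `m` contained in some term `Z_i(G)` (`i ≥ 1`) of the
upper central series is contained in `Z_m(G)`. -/
theorem finite_normal_in_hypercentre_le_Zm {G : Type*} [Group G] (N : Subgroup G)
    (hN : N.Normal) (hfin : Finite N) (m : ℕ) (hm : Nat.card N = m)
    (i : ℕ) (hi : 1 ≤ i) (hle : N ≤ upperCentralSeries G i) :
    N ≤ upperCentralSeries G m := by
  have hNfin' : (N : Set G).Finite := Set.toFinite _
  have key : ∀ k, N ≤ upperCentralSeries G k ∨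
      k + 1 ≤ Nat.card (↥(N ⊓ upperCentralSeries G k)) := by
    intro k
    induction k with
    | zero =>
      right
      have hf : Finite (↥(N ⊓ upperCentralSeries G 0)) :=
        Set.Finite.to_subtype (hNfin'.subset fun x hx => hx.1)
      have : 0 < Nat.card (↥(N ⊓ upperCentralSeries G 0)) := Nat.card_pos
      omega
    | succ k ih =>
      rcases ih with h | h
      · exact Or.inl (h.trans (upperCentralSeries_mono G (Nat.le_succ k)))
      · by_cases heq : N ⊓ upperCentralSeries G (k + 1) = N ⊓ upperCentralSeries G k
        · left
          rcases le_or_gt i k with hik | hik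
          · exact (hle.trans (upperCentralSeries_mono G hik)).trans
              (upperCentralSeries_mono G (Nat.le_succ k))
          · have hstab := stab_aux N hN k heq i hik.le
            have hNk : N ≤ upperCentralSeries G k := by
              intro x hx
              have : x ∈ N ⊓ upperCentralSeries G k :=
                hstab ▸ Subgroup.mem_inf.mpr ⟨hx, hle hx⟩
              exact (Subgroup.mem_inf.mp this).2
            exact hNk.trans (upperCentralSeries_mono G (Nat.le_succ k))
        · right
          have hlt : N ⊓ upperCentralSeries G k < N ⊓ upperCentralSeries G (k + 1) :=
            lt_of_le_of_ne (inf_le_inf_left N (upperCentralSeries_mono G (Nat.le_succ k)))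
              (Ne.symm heq)
          have hsub : ((N ⊓ upperCentralSeries G k : Subgroup G) : Set G) ⊂
              ((N ⊓ upperCentralSeries G (k+1) : Subgroup G) : Set G) :=
            ⟨hlt.le, fun hsub => hlt.ne (le_antisymm hlt.le hsub)⟩
          have hfin2 : ((N ⊓ upperCentralSeries G (k+1) : Subgroup G) : Set G).Finite :=
            hNfin'.subset fun x hx => hx.1
          have hcard := Set.ncard_lt_ncard hsub hfin2
          rw [← Nat.card_coe_set_eq, ← Nat.card_coe_set_eq] at hcard
          simp only [SetLike.coe_sort_coe] at hcard
          omega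
  rcases key m with h | h
  · exact h
  · exfalso
    have : Fintype N := Fintype.ofFinite N
    have hle' : Nat.card (↥(N ⊓ upperCentralSeries G m)) ≤ Nat.card N :=
      Subgroup.card_le_of_le inf_le_left
    omega
end

section
/- Let G be a group such that G/Z_i(G) is finite for some i ≥ 0 (i.e., G is finite-by-nilpotent). Then every right Engel element of G lies in Z_k(G) for some finite k; in particular, the set of right Engel elements of G equals the ω-hypercentre Z_ω(G) = ⋃_{k<ω} Z_k(G), assuming that every right Engel element of the finite quotient G/Z_i(G) lies in some finite term of its upper central series. -/
lemma engel_map {G H : Type*} [Group G] [Group H] (f : G →* H) (x y : G) :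
    ∀ n, f (engel x y n) = engel (f x) (f y) n
  | 0 => rfl
  | n + 1 => by simp [engel, engel_map f x y n]

lemma engel_one_left {G : Type*} [Group G] (y : G) : ∀ n, engel (1 : G) y n = 1
  | 0 => rfl
  | n + 1 => by simp [engel, engel_one_left y n]

lemma engel_shift {G : Type*} [Group G] (x y : G) :
    ∀ n, engel (engel x y 1) y n = engel x y (n + 1)
  | 0 => rfl
  | n + 1 => by
    show (engel (engel x y 1) y n)⁻¹ * y⁻¹ * _ * y = _
    rw [engel_shift x y n]; rfl

lemma engel_mem_step {G : Type*} [Group G] {k : ℕ} {a : G} (g : G)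
    (ha : a ∈ Subgroup.upperCentralSeries G (k + 1)) :
    engel a g 1 ∈ Subgroup.upperCentralSeries G k := by
  have h1 : a * g⁻¹ * a⁻¹ * g⁻¹⁻¹ ∈ Subgroup.upperCentralSeries G k :=
    Subgroup.mem_upperCentralSeries_succ_iff.mp ha g⁻¹
  have h2 : (a * g⁻¹ * a⁻¹ * g⁻¹⁻¹)⁻¹ ∈ Subgroup.upperCentralSeries G k :=
    (Subgroup.upperCentralSeries G k).inv_mem h1
  have h3 := (inferInstance : (Subgroup.upperCentralSeries G k).Normal).conj_mem _ h2 a⁻¹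
  have : a⁻¹ * (a * g⁻¹ * a⁻¹ * g⁻¹⁻¹)⁻¹ * a⁻¹⁻¹ = a⁻¹ * g⁻¹ * a * g := by
    group
  rw [this] at h3
  simpa [engel] using h3

lemma engel_eq_one_of_mem {G : Type*} [Group G] :
    ∀ (k : ℕ) (a g : G), a ∈ Subgroup.upperCentralSeries G k → engel a g k = 1
  | 0, a, g, ha => by simpa [engel] using ha
  | k + 1, a, g, ha => by
    rw [← engel_shift]
    exact engel_eq_one_of_mem k _ g (engel_mem_step g ha)

lemma comap_ucs_quot {G : Type*} [Group G] (i : ℕ) :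
    ∀ j, (Subgroup.upperCentralSeries (G ⧸ Subgroup.upperCentralSeries G i) j).comap
        (QuotientGroup.mk' (Subgroup.upperCentralSeries G i)) = Subgroup.upperCentralSeries G (i + j)
  | 0 => by
    simpa using QuotientGroup.ker_mk' (Subgroup.upperCentralSeries G i)
  | j + 1 => by
    ext x
    rw [Subgroup.mem_comap, ← Nat.add_assoc, Subgroup.mem_upperCentralSeries_succ_iff,
      Subgroup.mem_upperCentralSeries_succ_iff]
    constructor
    · intro h y
      have := h (QuotientGroup.mk y)
      rw [← comap_ucs_quot i j]
      simpa using this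
    · intro h q
      obtain ⟨y, rfl⟩ := QuotientGroup.mk'_surjective (Subgroup.upperCentralSeries G i) q
      have := h y
      rw [← comap_ucs_quot i j] at this
      simpa using this

/-- If `G/Z_i(G)` is finite (i.e. `G` is finite-by-nilpotent), and every right Engel
element of the finite quotient `G/Z_i(G)` lies in some finite term of its upper central
series, then the set of right Engel elements of `G` equals `Z_ω(G) = ⋃_k Z_k(G)`. -/
theorem finite_by_nilpotent_right_engel_eq_omega_hypercentre {G : Type*} [Group G]
    (i : ℕ) (hfin : Finite (G ⧸ Subgroup.upperCentralSeries G i))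
    (hBaer : ∀ a : G ⧸ Subgroup.upperCentralSeries G i,
      (∀ g : G ⧸ Subgroup.upperCentralSeries G i, ∃ n ≥ 1, engel a g n = 1) →
      ∃ j, a ∈ Subgroup.upperCentralSeries (G ⧸ Subgroup.upperCentralSeries G i) j) :
    (∀ a : G, (∀ g : G, ∃ n ≥ 1, engel a g n = 1) → ∃ k, a ∈ Subgroup.upperCentralSeries G k) ∧
    {a : G | ∀ g : G, ∃ n ≥ 1, engel a g n = 1} =
      ⋃ k : ℕ, (Subgroup.upperCentralSeries G k : Set G) := by
  have main : ∀ a : G, (∀ g : G, ∃ n ≥ 1, engel a g n = 1) →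
      ∃ k, a ∈ Subgroup.upperCentralSeries G k := by
    intro a ha
    obtain ⟨j, hj⟩ := hBaer (QuotientGroup.mk' (Subgroup.upperCentralSeries G i) a) (by
      intro q
      obtain ⟨y, rfl⟩ := QuotientGroup.mk'_surjective (Subgroup.upperCentralSeries G i) q
      obtain ⟨n, hn1, hn⟩ := ha y
      exact ⟨n, hn1, by rw [← engel_map, hn, map_one]⟩)
    refine ⟨i + j, ?_⟩
    rw [← comap_ucs_quot i j]
    exact hj
  refine ⟨main, ?_⟩
  ext a
  simp only [Set.mem_setOf_eq, Set.mem_iUnion, SetLike.mem_coe]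
  constructor
  · exact main a
  · rintro ⟨k, hk⟩ g
    refine ⟨k + 1, by omega, ?_⟩
    show (engel a g k)⁻¹ * g⁻¹ * engel a g k * g = 1
    rw [engel_eq_one_of_mem k a g hk]
    group
end

section
/- Let G be a group, a ∈ G, and suppose G = H·C, where H is a subgroup, C centralizes the normal closure N = a^G, and a ∈ Z_k(HN) with N ≤ HN. Then for all g₁, …, g_k ∈ G, the iterated commutator [a, g₁, …, g_k] = 1; in particular a ∈ Z_k(G). -/
private theorem mem_ucs_succ_iff' {G : Type*} [Group G] {n : ℕ} {x : G} :
    x ∈ upperCentralSeries G (n + 1) ↔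
      ∀ y : G, x⁻¹ * y⁻¹ * x * y ∈ upperCentralSeries G n := by
  rw [upperCentralSeries, mem_upperCentralSeries_succ_iff]
  constructor
  · intro h y
    have h1 := h (x⁻¹ * y⁻¹ * x)
    have he : x⁻¹ * y⁻¹ * x * y = (x * (x⁻¹ * y⁻¹ * x) * x⁻¹ * (x⁻¹ * y⁻¹ * x)⁻¹)⁻¹ := by
      group
    rw [he]
    exact inv_mem h1
  · intro h y
    have h1 := h (x * y⁻¹ * x⁻¹)
    have he : x * y * x⁻¹ * y⁻¹ = (x⁻¹ * (x * y⁻¹ * x⁻¹)⁻¹ * x * (x * y⁻¹ * x⁻¹))⁻¹ := by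
      group
    rw [commutatorElement_def, he]
    exact inv_mem h1

private theorem mem_ucs_of_commutators {G : Type*} [Group G] :
    ∀ (n : ℕ) (x : G),
      (∀ l : List G, l.length = n → l.foldl (fun u g => u⁻¹ * g⁻¹ * u * g) x = 1) →
      x ∈ upperCentralSeries G n := by
  intro n
  induction n with
  | zero =>
    intro x h
    have := h [] rfl
    simp only [List.foldl_nil] at this
    rw [upperCentralSeries, upperCentralSeries_zero, Subgroup.mem_bot]
    exact this
  | succ n ih =>
    intro x h
    rw [mem_ucs_succ_iff']
    intro y
    apply ih
    intro l hl
    have := h (y :: l) (by simp [hl])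
    simpa using this

/-- If `G = H·C` where `C` centralizes the normal closure `N = a^G`, and `a ∈ Z_k(HN)`,
then `[a, g₁, …, g_k] = 1` for all `g₁, …, g_k ∈ G`; in particular `a ∈ Z_k(G)`. -/
theorem engel_from_local_upper_central {G : Type*} [Group G] (a : G) (H C : Subgroup G)
    (k : ℕ) (N : Subgroup G) (hN : N = Subgroup.normalClosure ({a} : Set G))
    (hHC : ∀ g : G, ∃ h ∈ H, ∃ c ∈ C, g = h * c)
    (hcent : ∀ c ∈ C, ∀ y ∈ N, c * y = y * c)
    (haN : a ∈ N)
    (haZ : (⟨a, (le_sup_right : N ≤ H ⊔ N) haN⟩ : ↥(H ⊔ N)) ∈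
      upperCentralSeries ↥(H ⊔ N) k) :
    (∀ gs : Fin k → G,
      (List.ofFn gs).foldl (fun u g => u⁻¹ * g⁻¹ * u * g) a = 1) ∧
    a ∈ upperCentralSeries G k := by
  have hNnorm : N.Normal := hN ▸ Subgroup.normalClosure_normal
  have key : ∀ (l : List G) (u : G) (hu : u ∈ N),
      (⟨u, (le_sup_right : N ≤ H ⊔ N) hu⟩ : ↥(H ⊔ N)) ∈
        upperCentralSeries ↥(H ⊔ N) l.length →
      l.foldl (fun u g => u⁻¹ * g⁻¹ * u * g) u = 1 := by
    intro l
    induction l with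
    | nil =>
      intro u hu hz
      simp only [List.length_nil, upperCentralSeries, upperCentralSeries_zero, Subgroup.mem_bot,
        Subtype.ext_iff] at hz
      simpa using hz
    | cons g t ih =>
      intro u hu hz
      obtain ⟨h, hh, c, hc, rfl⟩ := hHC g
      have hyN : h⁻¹ * u * h ∈ N := by
        have := hNnorm.conj_mem u hu h⁻¹
        simpa using this
      have hy := hcent c hc _ hyN
      have hfg : u⁻¹ * (h * c)⁻¹ * u * (h * c) = u⁻¹ * h⁻¹ * u * h := by
        calc u⁻¹ * (h * c)⁻¹ * u * (h * c) = u⁻¹ * c⁻¹ * ((h⁻¹ * u * h) * c) := by group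
        _ = u⁻¹ * c⁻¹ * (c * (h⁻¹ * u * h)) := by rw [hy]
        _ = u⁻¹ * h⁻¹ * u * h := by group
      have huN' : u⁻¹ * h⁻¹ * u * h ∈ N := by
        have := mul_mem (inv_mem hu) hyN
        simpa [mul_assoc] using this
      have hz' : (⟨u⁻¹ * h⁻¹ * u * h, (le_sup_right : N ≤ H ⊔ N) huN'⟩ : ↥(H ⊔ N)) ∈
          upperCentralSeries ↥(H ⊔ N) t.length := by
        simp only [List.length_cons] at hz
        have := (mem_ucs_succ_iff'.mp hz) ⟨h, (le_sup_left : H ≤ H ⊔ N) hh⟩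
        exact this
      have := ih (u⁻¹ * h⁻¹ * u * h) huN' hz'
      rw [List.foldl_cons]
      show List.foldl _ (u⁻¹ * (h * c)⁻¹ * u * (h * c)) t = 1
      rw [hfg]
      exact this
  have part1 : ∀ gs : Fin k → G,
      (List.ofFn gs).foldl (fun u g => u⁻¹ * g⁻¹ * u * g) a = 1 := by
    intro gs
    exact key (List.ofFn gs) a haN (by rw [List.length_ofFn]; exact haZ)
  refine ⟨part1, ?_⟩
  apply mem_ucs_of_commutators
  intro l hl
  subst hl
  have := part1 l.get
  rwa [List.ofFn_get] at this
end

section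
/- Let G be a group and let ρ̄(G) be the set of elements a ∈ G such that there exists k = k(a) with ⟨x⟩ subnormal of defect at most k in ⟨x, a^G⟩ for every x ∈ G. Then every element of ρ̄(G) is a bounded right Engel element of G. -/
/-- `A` is normal in `B` as subgroups of `G` (a step in a subnormal chain). -/
def StepNormal {G : Type*} [Group G] (A B : Subgroup G) : Prop :=
  A ≤ B ∧ ∀ b ∈ B, ∀ x ∈ A, b * x * b⁻¹ ∈ A

/-- `A` is subnormal of defect at most `k` in `B`. -/
def SubnormalOfDefect {G : Type*} [Group G] (A B : Subgroup G) (k : ℕ) : Prop :=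
  ∃ c : Fin (k + 1) → Subgroup G, c 0 = A ∧ c (Fin.last k) = B ∧
    ∀ i : Fin k, StepNormal (c i.castSucc) (c i.succ)

/-- If there is `k` such that `⟨x⟩` is subnormal of defect at most `k` in `⟨x, a^G⟩`
for every `x ∈ G`, then `a` is a bounded right Engel element of `G`. -/
theorem rho_bar_subset_bounded_right_engel {G : Type*} [Group G] (a : G)
    (h : ∃ k : ℕ, ∀ x : G, SubnormalOfDefect (Subgroup.zpowers x)
      (Subgroup.zpowers x ⊔ Subgroup.normalClosure ({a} : Set G)) k) :
    ∃ n ≥ 1, ∀ g : G, engel a g n = 1 := by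
  obtain ⟨k, hk⟩ := h
  refine ⟨k + 1, Nat.le_add_left 1 k, fun g => ?_⟩
  obtain ⟨c, hc0, hclast, hstep⟩ := hk g
  -- g belongs to every member of the chain
  have hg : ∀ m : ℕ, ∀ hm : m ≤ k, g ∈ c ⟨m, by omega⟩ := by
    intro m
    induction m with
    | zero =>
      intro _
      have : (⟨0, by omega⟩ : Fin (k + 1)) = 0 := rfl
      rw [this, hc0]
      exact Subgroup.mem_zpowers g
    | succ m ih =>
      intro hm
      have hm' : m ≤ k := by omega
      have hle := (hstep ⟨m, by omega⟩).1
      have h1 : (⟨m, by omega⟩ : Fin k).castSucc = (⟨m, by omega⟩ : Fin (k + 1)) := rfl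
      have h2 : (⟨m, by omega⟩ : Fin k).succ = (⟨m + 1, by omega⟩ : Fin (k + 1)) := rfl
      rw [h1, h2] at hle
      exact hle (ih hm')
  -- engel element descends the chain
  have key : ∀ j : ℕ, ∀ hj : j ≤ k, engel a g j ∈ c ⟨k - j, by omega⟩ := by
    intro j
    induction j with
    | zero =>
      intro _
      have : (⟨k - 0, by omega⟩ : Fin (k + 1)) = Fin.last k := by
        ext; simp
      rw [this, hclast]
      exact Subgroup.mem_sup_right
        (Subgroup.subset_normalClosure (by simp : a ∈ ({a} : Set G)))
    | succ j ih =>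
      intro hj
      have hj' : j ≤ k := by omega
      have he := ih hj'
      set i : Fin k := ⟨k - (j + 1), by omega⟩ with hi
      obtain ⟨hle, hconj⟩ := hstep i
      have h1 : i.castSucc = (⟨k - (j + 1), by omega⟩ : Fin (k + 1)) := rfl
      have h2 : i.succ = (⟨k - j, by omega⟩ : Fin (k + 1)) := by
        ext; simp [hi, Fin.succ]; omega
      rw [h1, h2] at hle hconj
      have hgA : g ∈ c ⟨k - (j + 1), by omega⟩ := hg _ (by omega)
      have heB : engel a g j ∈ c ⟨k - j, by omega⟩ := he
      have hc1 : (engel a g j)⁻¹ * g⁻¹ * engel a g j ∈ c ⟨k - (j + 1), by omega⟩ := by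
        have := hconj (engel a g j)⁻¹ (inv_mem heB) g⁻¹ (inv_mem hgA)
        simpa [mul_assoc] using this
      show engel a g (j + 1) ∈ c ⟨k - (j + 1), by omega⟩
      show (engel a g j)⁻¹ * g⁻¹ * engel a g j * g ∈ _
      exact mul_mem hc1 hgA
  have hlast := key k le_rfl
  have h0 : (⟨k - k, by omega⟩ : Fin (k + 1)) = 0 := by ext; simp
  rw [h0, hc0] at hlast
  obtain ⟨m, hm⟩ := hlast
  show (engel a g k)⁻¹ * g⁻¹ * engel a g k * g = 1
  have hcomm : Commute g (engel a g k) := by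
    rw [← hm]; exact (Commute.refl g).zpow_right m
  rw [mul_assoc, ← hcomm.eq]
  group
end

section
/- Let p be an odd prime, n ≥ 2, and P = ⟨a, b | a^{p^n} = b^{p^{n-1}} = 1, a^b = a^{1+p}⟩. Then a ∈ Z_n(P) and the commutator [a,b] = a^p lies in Z_{n-1}(P). -/
/-- Relations for the metacyclic group `⟨a, b | a^{p^n} = 1, b^{p^{n-1}} = 1, a^b = a^{1+p}⟩`,
with `a` the generator `0` and `b` the generator `1`. -/
def metacyclicRels (p n : ℕ) : Set (FreeGroup (Fin 2)) :=
  {FreeGroup.of 0 ^ p ^ n, FreeGroup.of 1 ^ p ^ (n - 1),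
    (FreeGroup.of 1)⁻¹ * FreeGroup.of 0 * FreeGroup.of 1 * (FreeGroup.of 0 ^ (1 + p))⁻¹}

/-- The metacyclic `p`-group `P = ⟨a, b | a^{p^n} = 1, b^{p^{n-1}} = 1, a^b = a^{1+p}⟩`. -/
abbrev MetacyclicP (p n : ℕ) : Type := PresentedGroup (metacyclicRels p n)

/-- The set of `y` whose commutator with a fixed `x` lies in a normal subgroup `H` is a
subgroup. -/
def commSubgroup {G : Type*} [Group G] (x : G) (H : Subgroup G) [H.Normal] : Subgroup G where
  carrier := {y | x * y * x⁻¹ * y⁻¹ ∈ H}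
  one_mem' := by
    show x * 1 * x⁻¹ * 1⁻¹ ∈ H
    simpa using H.one_mem
  mul_mem' := by
    intro y z hy hz
    have e : x * (y * z) * x⁻¹ * (y * z)⁻¹ =
        (x * y * x⁻¹ * y⁻¹) * (y * (x * z * x⁻¹ * z⁻¹) * y⁻¹) := by group
    simp only [Set.mem_setOf_eq] at *
    rw [e]
    exact H.mul_mem hy (Subgroup.Normal.conj_mem ‹H.Normal› _ hz y)
  inv_mem' := by
    intro y hy
    simp only [Set.mem_setOf_eq] at *
    have e : x * y⁻¹ * x⁻¹ * y⁻¹⁻¹ = y⁻¹ * (x * y * x⁻¹ * y⁻¹)⁻¹ * y⁻¹⁻¹ := by group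
    rw [e]
    exact Subgroup.Normal.conj_mem ‹H.Normal› _ (H.inv_mem hy) y⁻¹

/-- For `p` an odd prime and `n ≥ 2`, in `P` one has `a ∈ Z_n(P)` and
`[a,b] = a^p ∈ Z_{n-1}(P)` (with the convention `[a,b] = a⁻¹b⁻¹ab`). -/
theorem metacyclic_upper_central (p n : ℕ) (hp : p.Prime) (hodd : Odd p) (hn : 2 ≤ n) :
    (PresentedGroup.of 0 : MetacyclicP p n) ∈ upperCentralSeries (MetacyclicP p n) n ∧
    ((PresentedGroup.of 0 : MetacyclicP p n)⁻¹ * (PresentedGroup.of 1)⁻¹ *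
        PresentedGroup.of 0 * PresentedGroup.of 1 =
      (PresentedGroup.of 0 : MetacyclicP p n) ^ p) ∧
    ((PresentedGroup.of 0 : MetacyclicP p n)⁻¹ * (PresentedGroup.of 1)⁻¹ *
        PresentedGroup.of 0 * PresentedGroup.of 1) ∈
      upperCentralSeries (MetacyclicP p n) (n - 1) := by
  set G := MetacyclicP p n
  set a : G := PresentedGroup.of 0 with ha_def
  set b : G := PresentedGroup.of 1 with hb_def
  -- relations hold in the quotient
  have key : ∀ r ∈ metacyclicRels p n, PresentedGroup.mk (metacyclicRels p n) r = 1 := by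
    intro r hr
    exact (QuotientGroup.eq_one_iff r).mpr (Subgroup.subset_normalClosure hr)
  have ha : a ^ p ^ n = 1 := by
    have := key _ (Or.inl rfl)
    rw [map_pow] at this
    exact this
  have hrel : b⁻¹ * a * b = a ^ (1 + p) := by
    have := key _ (Or.inr (Or.inr rfl))
    simp only [map_mul, map_inv, map_pow] at this
    have h2 : (b⁻¹ * a * b) * (a ^ (1 + p))⁻¹ = 1 := this
    rw [mul_inv_eq_one] at h2
    exact h2
  -- conjugation of powers of a by b
  have hconj : ∀ m : ℕ, a ^ m * b = b * a ^ (m * (1 + p)) := by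
    intro m
    have h0 := conj_pow (i := m) (a := (b : G)⁻¹) (b := a)
    rw [inv_inv] at h0
    have h1 : b⁻¹ * a ^ m * b = (b⁻¹ * a * b) ^ m := h0.symm
    rw [hrel, ← pow_mul, Nat.mul_comm] at h1
    calc a ^ m * b = b * (b⁻¹ * a ^ m * b) := by group
      _ = b * a ^ (m * (1 + p)) := by rw [h1]
  -- main induction
  have main : ∀ k, k ≤ n → a ^ p ^ (n - k) ∈ upperCentralSeries G k := by
    intro k
    induction k with
    | zero => intro _; show _ ∈ Subgroup.upperCentralSeries G 0; simpa using ha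
    | succ k ih =>
      intro hk1
      have hk : k ≤ n := Nat.le_of_succ_le hk1
      have ihk := ih hk
      show _ ∈ Subgroup.upperCentralSeries G (k + 1)
      rw [Subgroup.mem_upperCentralSeries_succ_iff]
      set x : G := a ^ p ^ (n - (k + 1)) with hx_def
      have hN : (upperCentralSeries G k).Normal :=
        (inferInstance : (Subgroup.upperCentralSeries G k).Normal)
      suffices hS : (⊤ : Subgroup G) ≤ commSubgroup x (upperCentralSeries G k) by
        intro y
        exact hS (Subgroup.mem_top y)
      rw [← PresentedGroup.closure_range_of (metacyclicRels p n)]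
      rw [Subgroup.closure_le]
      rintro _ ⟨i, rfl⟩
      fin_cases i
      · -- generator a: commutes with x
        show x * a * x⁻¹ * a⁻¹ ∈ upperCentralSeries G k
        have : x * a = a * x := by
          rw [hx_def, ← pow_succ, ← pow_succ']
        have e1 : a * x * x⁻¹ * a⁻¹ = 1 := by group
        rw [this, e1]
        exact Subgroup.one_mem _
      · -- generator b
        show x * b * x⁻¹ * b⁻¹ ∈ upperCentralSeries G k
        have hc := hconj (p ^ (n - (k + 1)))
        have hpow : p ^ (n - (k + 1)) * (1 + p) = p ^ (n - (k + 1)) + p ^ (n - k) := by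
          have : n - k = (n - (k + 1)) + 1 := by omega
          rw [this, mul_add, mul_one, pow_succ]
        rw [hpow] at hc
        have e2 : a ^ (p ^ (n - (k + 1)) + p ^ (n - k)) * (a ^ p ^ (n - (k + 1)))⁻¹ =
            a ^ p ^ (n - k) := by
          rw [Nat.add_comm, pow_add, mul_inv_cancel_right]
        have e : x * b * x⁻¹ * b⁻¹ = b * a ^ p ^ (n - k) * b⁻¹ := by
          rw [hx_def, hc, mul_assoc b, e2]
        rw [e]
        exact hN.conj_mem _ ihk b
  have comm_eq : a⁻¹ * b⁻¹ * a * b = a ^ p := by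
    have h1 : b⁻¹ * a * b = a ^ (1 + p) := hrel
    calc a⁻¹ * b⁻¹ * a * b = a⁻¹ * (b⁻¹ * a * b) := by group
      _ = a⁻¹ * a ^ (1 + p) := by rw [h1]
      _ = a ^ p := by rw [pow_add, pow_one]; group
  refine ⟨?_, comm_eq, ?_⟩
  · have := main n le_rfl
    simpa using this
  · rw [comm_eq]
    have := main (n - 1) (Nat.sub_le n 1)
    have h2 : n - (n - 1) = 1 := by omega
    rw [h2, pow_one] at this
    exact this
end
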